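/- Let $p$ be a probability vector with $p_i > 0$ for all $i$, and define the rescaled Irwin–Lancaster vectors $v^{(r)}$ for $1 \le r \le d-1$ by $v_j^{(r)} = -(p_{r+1}+\cdots+p_d)/p_r$ if $j = r$, $v_j^{(r)} = 1$ if $j > r$, and $v_j^{(r)} = 0$ if $j < r$. Then for $l \le m < r$, the triple sum $c(l,m,r) = \sum_{j=1}^d v_j^{(l)} v_j^{(m)} v_j^{(r)} p_j$ equals $0$; for $l < m = r$, $c(l,m,r) = (p_{r+1}+\cdots+p_d)^2/p_r + (p_{r+1}+\cdots+p_d) \ge 0$; and for $l = m = r$, $c(r,r,r) = \frac{p_{r+1}+\cdots+p_d}{p_r^2}\big(p_r^2 - (p_{r+1}+\cdots+p_d)^2\big)$. -/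

import Mathlib

open Finset

lemma split_sum (d r : ℕ) (h1 : 1 ≤ r) (h2 : r ≤ d) (g : ℕ → ℝ)
    (hz : ∀ j ∈ Finset.Icc 1 d, j < r → g j = 0) :
    ∑ j ∈ Finset.Icc 1 d, g j = g r + ∑ j ∈ Finset.Icc (r + 1) d, g j := by
  have key : ∑ j ∈ Finset.Ioc 0 r, g j + ∑ j ∈ Finset.Ioc r d, g j
      = ∑ j ∈ Finset.Ioc 0 d, g j :=
    Finset.sum_Ioc_consecutive g (Nat.zero_le r) h2
  have h0 : Finset.Icc 1 d = Finset.Ioc 0 d := by rw [← Finset.Icc_add_one_left_eq_Ioc]; rfl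
  have h0' : Finset.Icc (r + 1) d = Finset.Ioc r d := by rw [← Finset.Icc_add_one_left_eq_Ioc]
  have hhead : ∑ j ∈ Finset.Ioc 0 r, g j = g r := by
    apply Finset.sum_eq_single_of_mem
    · simp only [Finset.mem_Ioc]; omega
    · intro j hj hne
      simp only [Finset.mem_Ioc] at hj
      exact hz j (by simp only [Finset.mem_Icc]; omega) (by omega)
  rw [h0, h0', ← key, hhead]

/-- Triple-product computations for the rescaled Irwin–Lancaster vectors `v⁽ʳ⁾`. -/
theorem stmt7 (d : ℕ) (hd : 1 ≤ d) (p : ℕ → ℝ) (v : ℕ → ℕ → ℝ)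
    (hp : ∀ i ∈ Finset.Icc 1 d, 0 < p i)
    (hsum : ∑ i ∈ Finset.Icc 1 d, p i = 1)
    (hv : ∀ r ∈ Finset.Icc 1 (d - 1), ∀ j ∈ Finset.Icc 1 d,
      v r j = if j < r then 0
        else if j = r then -(∑ i ∈ Finset.Icc (r + 1) d, p i) / p r
        else 1) :
    (∀ l ∈ Finset.Icc 1 (d - 1), ∀ m ∈ Finset.Icc 1 (d - 1),
      ∀ r ∈ Finset.Icc 1 (d - 1), l ≤ m → m < r →
      ∑ j ∈ Finset.Icc 1 d, v l j * v m j * v r j * p j = 0) ∧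
    (∀ l ∈ Finset.Icc 1 (d - 1), ∀ r ∈ Finset.Icc 1 (d - 1), l < r →
      ∑ j ∈ Finset.Icc 1 d, v l j * v r j * v r j * p j =
        (∑ i ∈ Finset.Icc (r + 1) d, p i) ^ 2 / p r +
          (∑ i ∈ Finset.Icc (r + 1) d, p i) ∧
      0 ≤ ∑ j ∈ Finset.Icc 1 d, v l j * v r j * v r j * p j) ∧
    (∀ r ∈ Finset.Icc 1 (d - 1),
      ∑ j ∈ Finset.Icc 1 d, v r j * v r j * v r j * p j =
        (∑ i ∈ Finset.Icc (r + 1) d, p i) / p r ^ 2 *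
          (p r ^ 2 - (∑ i ∈ Finset.Icc (r + 1) d, p i) ^ 2)) := by
  refine ⟨?_, ?_, ?_⟩
  · -- l ≤ m < r
    intro l hl m hm r hr hlm hmr
    have hl' := hl; have hm' := hm; have hr' := hr
    simp only [Finset.mem_Icc] at hl' hm' hr'
    have hrd : r ≤ d := by omega
    have hrmem : r ∈ Finset.Icc 1 d := by simp only [Finset.mem_Icc]; omega
    have hpr := hp r hrmem
    rw [split_sum d r (by omega) hrd _ (by
      intro j hj hjr
      rw [hv r hr j hj, if_pos hjr]; ring)]
    have htail : ∑ j ∈ Finset.Icc (r + 1) d, (v l j * v m j * v r j * p j)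
        = ∑ i ∈ Finset.Icc (r + 1) d, p i := by
      apply Finset.sum_congr rfl
      intro j hj
      simp only [Finset.mem_Icc] at hj
      have hj' : j ∈ Finset.Icc 1 d := by simp only [Finset.mem_Icc]; omega
      rw [hv l hl j hj', hv m hm j hj', hv r hr j hj',
        if_neg (by omega), if_neg (by omega), if_neg (by omega),
        if_neg (by omega), if_neg (by omega), if_neg (by omega)]
      ring
    rw [htail, hv l hl r hrmem, hv m hm r hrmem, hv r hr r hrmem,
      if_neg (by omega), if_neg (by omega), if_neg (by omega), if_neg (by omega),
      if_neg (lt_irrefl r), if_pos rfl]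
    field_simp
    ring
  · -- l < m = r
    intro l hl r hr hlr
    have hl' := hl; have hr' := hr
    simp only [Finset.mem_Icc] at hl' hr'
    have hrd : r ≤ d := by omega
    have hrmem : r ∈ Finset.Icc 1 d := by simp only [Finset.mem_Icc]; omega
    have hpr := hp r hrmem
    have hS0 : 0 ≤ ∑ i ∈ Finset.Icc (r + 1) d, p i := by
      apply Finset.sum_nonneg
      intro i hi
      simp only [Finset.mem_Icc] at hi
      exact (hp i (by simp only [Finset.mem_Icc]; omega)).le
    have heq : ∑ j ∈ Finset.Icc 1 d, v l j * v r j * v r j * p j =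
        (∑ i ∈ Finset.Icc (r + 1) d, p i) ^ 2 / p r +
          (∑ i ∈ Finset.Icc (r + 1) d, p i) := by
      rw [split_sum d r (by omega) hrd _ (by
        intro j hj hjr
        rw [hv r hr j hj, if_pos hjr]; ring)]
      have htail : ∑ j ∈ Finset.Icc (r + 1) d, (v l j * v r j * v r j * p j)
          = ∑ i ∈ Finset.Icc (r + 1) d, p i := by
        apply Finset.sum_congr rfl
        intro j hj
        simp only [Finset.mem_Icc] at hj
        have hj' : j ∈ Finset.Icc 1 d := by simp only [Finset.mem_Icc]; omega
        rw [hv l hl j hj', hv r hr j hj',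
          if_neg (by omega), if_neg (by omega), if_neg (by omega), if_neg (by omega)]
        ring
      rw [htail, hv l hl r hrmem, hv r hr r hrmem,
        if_neg (by omega), if_neg (by omega), if_neg (lt_irrefl r), if_pos rfl]
      field_simp
    exact ⟨heq, by
      rw [heq]
      exact add_nonneg (div_nonneg (sq_nonneg _) hpr.le) hS0⟩
  · -- l = m = r
    intro r hr
    have hr' := hr
    simp only [Finset.mem_Icc] at hr'
    have hrd : r ≤ d := by omega
    have hrmem : r ∈ Finset.Icc 1 d := by simp only [Finset.mem_Icc]; omega
    have hpr := hp r hrmem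
    rw [split_sum d r (by omega) hrd _ (by
      intro j hj hjr
      rw [hv r hr j hj, if_pos hjr]; ring)]
    have htail : ∑ j ∈ Finset.Icc (r + 1) d, (v r j * v r j * v r j * p j)
        = ∑ i ∈ Finset.Icc (r + 1) d, p i := by
      apply Finset.sum_congr rfl
      intro j hj
      simp only [Finset.mem_Icc] at hj
      have hj' : j ∈ Finset.Icc 1 d := by simp only [Finset.mem_Icc]; omega
      rw [hv r hr j hj', if_neg (by omega), if_neg (by omega)]
      ring
    rw [htail, hv r hr r hrmem, if_neg (lt_irrefl r), if_pos rfl]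
    field_simp
    ring
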